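/- Let n = d·t with integers d, t ≥ 1, let r ≥ 1 be an integer, and let A_1, …, A_r be mutually independent random subsets of an n-element set U, each distributed uniformly over the d-element subsets of U. Then P(A_1 ∩ ⋯ ∩ A_r = ∅) ≤ (1 − 1/t^r)^n. -/

import Mathlib

lemma bern15 (b : ℕ) (u : ℝ) (hu : 0 ≤ u) :
    u ^ b * (((b : ℝ) + 1) - b * u) ≤ 1 := by
  induction b with
  | zero => simp
  | succ b ih =>
    have h1 : u * (((b : ℝ) + 1 + 1) - ((b : ℝ) + 1) * u) ≤ ((b : ℝ) + 1) - b * u := by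
      nlinarith [sq_nonneg (1 - u)]
    calc u ^ (b + 1) * (((b + 1 : ℕ) : ℝ) + 1 - ((b + 1 : ℕ) : ℝ) * u)
        = u ^ b * (u * (((b : ℝ) + 1 + 1) - ((b : ℝ) + 1) * u)) := by push_cast; ring
      _ ≤ u ^ b * (((b : ℝ) + 1) - b * u) := by
          exact mul_le_mul_of_nonneg_left h1 (pow_nonneg hu b)
      _ ≤ 1 := ih

lemma amgm15 (b : ℕ) (a p M : ℝ) (ha : 0 ≤ a) (hp : 0 ≤ p)
    (h : a + b * p ≤ ((b : ℝ) + 1) * M) : a * p ^ b ≤ M ^ (b + 1) := by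
  have hbp : 0 ≤ (b : ℝ) * p := mul_nonneg (Nat.cast_nonneg b) hp
  have hM : 0 ≤ M := by nlinarith [Nat.cast_nonneg (α := ℝ) b]
  rcases eq_or_lt_of_le hM with h0 | h0
  · have ha0 : a = 0 := by nlinarith
    simp [ha0, ← h0]
  · set u := p / M with hu
    have hp' : p = u * M := by rw [hu, div_mul_cancel₀ p h0.ne']
    have hu0 : 0 ≤ u := div_nonneg hp h0.le
    have key := bern15 b u hu0
    have ha' : a ≤ (((b : ℝ) + 1) - b * u) * M := by
      have hb : (b : ℝ) * p = (b : ℝ) * u * M := by rw [hp']; ring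
      nlinarith
    calc a * p ^ b ≤ ((((b : ℝ) + 1) - b * u) * M) * p ^ b := by
          exact mul_le_mul_of_nonneg_right ha' (pow_nonneg hp b)
      _ = (u ^ b * (((b : ℝ) + 1) - b * u)) * M ^ (b + 1) := by rw [hp']; ring
      _ ≤ 1 * M ^ (b + 1) := mul_le_mul_of_nonneg_right key (pow_nonneg hM _)
      _ = M ^ (b + 1) := one_mul _

lemma core15 (m e : ℕ) (he1 : 1 ≤ e) (hem : e + 1 ≤ m) (s : ℝ) (hs0 : 0 ≤ s) (hs1 : s ≤ 1) :
    ∀ b : ℕ, b + 1 ≤ m →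
    (1 - s) * ((e : ℝ) / m) * (1 - s * ((e : ℝ) - 1) / ((m : ℝ) - 1)) ^ b
      + (1 - (e : ℝ) / m) * (1 - s * e / ((m : ℝ) - 1)) ^ b
    ≤ (1 - s * e / m) ^ (b + 1) := by
  have hmR : (2 : ℝ) ≤ m := by exact_mod_cast (by omega : 2 ≤ m)
  have heR : (1 : ℝ) ≤ e := by exact_mod_cast he1
  have heM : (e : ℝ) + 1 ≤ m := by exact_mod_cast hem
  have hm0 : (m : ℝ) ≠ 0 := by linarith
  have hm1 : (0 : ℝ) < (m : ℝ) - 1 := by linarith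
  set q : ℝ := (e : ℝ) / m with hq
  set P : ℝ := 1 - s * ((e : ℝ) - 1) / ((m : ℝ) - 1) with hP
  set Q : ℝ := 1 - s * e / ((m : ℝ) - 1) with hQ
  set M : ℝ := 1 - s * e / m with hM
  have hq0 : 0 ≤ q := by positivity
  have hq1 : q ≤ 1 := by rw [hq, div_le_one (by linarith)]; linarith
  have hQ0 : 0 ≤ Q := by
    rw [hQ, sub_nonneg, div_le_one hm1]; nlinarith
  have hP0 : 0 ≤ P := by
    rw [hP, sub_nonneg, div_le_one hm1]; nlinarith
  have hM0 : 0 ≤ M := by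
    rw [hM, sub_nonneg, div_le_one (by linarith : (0:ℝ) < m)]; nlinarith
  have hPQ : P - Q = s / ((m : ℝ) - 1) := by
    rw [hP, hQ]; field_simp; ring
  have hPQ0 : 0 ≤ P - Q := by rw [hPQ]; positivity
  have hQM : Q + q * (P - Q) = M := by
    rw [hPQ, hQ, hq, hM]; field_simp; ring
  intro b
  induction b with
  | zero =>
    intro _
    simp only [pow_zero, mul_one, zero_add, pow_one]
    have : (1 - s) * q + (1 - q) = M := by rw [hq, hM]; ring
    linarith
  | succ b ih =>
    intro hb
    have ihb := ih (by omega)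
    have hbR : (b : ℝ) + 2 ≤ m := by exact_mod_cast hb
    have key2 : (1 - s) * P ^ b ≤ M ^ (b + 1) := by
      apply amgm15 b (1 - s) P M (by linarith) hP0
      have hid : ((b : ℝ) + 1) * M - ((1 - s) + b * P)
          = s * (((m : ℝ) - e) * ((m : ℝ) - 1 - b)) / (m * ((m : ℝ) - 1)) := by
        rw [hM, hP]; field_simp; ring
      have hnn0 : 0 ≤ s * (((m : ℝ) - e) * ((m : ℝ) - 1 - b)) / (m * ((m : ℝ) - 1)) := by
        have h1 : (0:ℝ) ≤ (m : ℝ) - e := by linarith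
        have h2 : (0:ℝ) ≤ (m : ℝ) - 1 - b := by linarith
        have h3 : (0:ℝ) < (m : ℝ) * ((m:ℝ) - 1) := by nlinarith
        positivity
      have hnn : (0:ℝ) ≤ ((b : ℝ) + 1) * M - ((1 - s) + b * P) := by rw [hid]; exact hnn0
      linarith
    calc (1 - s) * q * P ^ (b + 1) + (1 - q) * Q ^ (b + 1)
        = Q * ((1 - s) * q * P ^ b + (1 - q) * Q ^ b) + q * (P - Q) * ((1 - s) * P ^ b) := by
          ring
      _ ≤ Q * M ^ (b + 1) + q * (P - Q) * ((1 - s) * P ^ b) := by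
          have := mul_le_mul_of_nonneg_left ihb hQ0
          linarith
      _ ≤ Q * M ^ (b + 1) + q * (P - Q) * M ^ (b + 1) := by
          have := mul_le_mul_of_nonneg_left key2 (mul_nonneg hq0 hPQ0)
          linarith
      _ = (Q + q * (P - Q)) * M ^ (b + 1) := by ring
      _ = M ^ (b + 1 + 1) := by rw [hQM]; ring

lemma hyper15 {α : Type*} [DecidableEq α] (x : ℝ) (hx0 : 0 ≤ x) (hx1 : x ≤ 1)
    (S : Finset α) :
    ∀ (V : Finset α) (e : ℕ), S ⊆ V →
      ∑ a ∈ V.powersetCard e, x ^ (S ∩ a).card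
        ≤ (V.card.choose e : ℝ) * (1 - (1 - x) * e / V.card) ^ S.card := by
  induction S using Finset.induction_on with
  | empty =>
    intro V e _
    simp [Finset.card_powersetCard]
  | @insert u S hu ih =>
    intro V e hSV
    have huV : u ∈ V := hSV (Finset.mem_insert_self u S)
    have hSV' : S ⊆ V.erase u := by
      intro v hv
      exact Finset.mem_erase.2 ⟨fun h => hu (h ▸ hv), hSV (Finset.mem_insert_of_mem hv)⟩
    have hVpos : 0 < V.card := Finset.card_pos.2 ⟨u, huV⟩
    match e with
    | 0 => simp
    | e' + 1 =>
      rcases lt_trichotomy V.card (e' + 1) with hlt | heq | hgt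
      · rw [Finset.powersetCard_eq_empty.2 hlt, Finset.sum_empty,
            Nat.choose_eq_zero_of_lt hlt]
        simp
      · rw [← heq, Finset.powersetCard_self, Finset.sum_singleton, Nat.choose_self,
            Finset.inter_eq_left.2 hSV]
        have hVne : ((V.card : ℕ) : ℝ) ≠ 0 := by positivity
        have h2 : (1 - (1 - x) * (V.card : ℝ) / V.card) = x := by field_simp; ring
        rw [h2]
        simp
      · -- main case : e' + 1 < V.card
        set V' := V.erase u with hV'
        have huV' : u ∉ V' := Finset.notMem_erase u V
        have hVins : insert u V' = V := Finset.insert_erase huV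
        have hcard : V.card = V'.card + 1 := by
          rw [hV', Finset.card_erase_of_mem huV]; omega
        have hsplit : V.powersetCard (e' + 1)
            = V'.powersetCard (e' + 1) ∪ (V'.powersetCard e').image (insert u) := by
          conv_lhs => rw [← hVins]
          exact Finset.powersetCard_succ_insert huV' e'
        have hdisj : Disjoint (V'.powersetCard (e' + 1))
            ((V'.powersetCard e').image (insert u)) := by
          rw [Finset.disjoint_left]
          rintro a ha hb
          obtain ⟨y, hy, rfl⟩ := Finset.mem_image.1 hb
          exact huV' ((Finset.mem_powersetCard.1 ha).1 (Finset.mem_insert_self u y))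
        rw [hsplit, Finset.sum_union hdisj]
        have h1 : ∑ a ∈ V'.powersetCard (e' + 1), x ^ (insert u S ∩ a).card
            = ∑ a ∈ V'.powersetCard (e' + 1), x ^ (S ∩ a).card := by
          apply Finset.sum_congr rfl
          intro a ha
          have hua : u ∉ a := fun h => huV' ((Finset.mem_powersetCard.1 ha).1 h)
          rw [Finset.insert_inter_of_notMem hua]
        have hinj : ∀ y ∈ V'.powersetCard e', ∀ z ∈ V'.powersetCard e',
            insert u y = insert u z → y = z := by
          intro y hy z hz hyz
          have hy' : u ∉ y := fun h => huV' ((Finset.mem_powersetCard.1 hy).1 h)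
          have hz' : u ∉ z := fun h => huV' ((Finset.mem_powersetCard.1 hz).1 h)
          rw [← Finset.erase_insert hy', ← Finset.erase_insert hz', hyz]
        have h2 : ∑ a ∈ (V'.powersetCard e').image (insert u), x ^ (insert u S ∩ a).card
            = ∑ y ∈ V'.powersetCard e', x ^ (S ∩ y).card * x := by
          rw [Finset.sum_image hinj]
          apply Finset.sum_congr rfl
          intro y hy
          have hy' : u ∉ y := fun h => huV' ((Finset.mem_powersetCard.1 hy).1 h)
          rw [Finset.insert_inter_of_mem (Finset.mem_insert_self u y),
              Finset.inter_insert_of_notMem hu,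
              Finset.card_insert_of_notMem (fun h => hu (Finset.mem_of_mem_inter_left h)),
              pow_succ]
        rw [h1, h2]
        have ihA := ih V' (e' + 1) hSV'
        have ihB := ih V' e' hSV'
        have hxB : ∑ y ∈ V'.powersetCard e', x ^ (S ∩ y).card * x
            ≤ ((V'.card.choose e' : ℝ) * (1 - (1 - x) * e' / V'.card) ^ S.card) * x := by
          rw [← Finset.sum_mul]
          exact mul_le_mul_of_nonneg_right ihB hx0
        refine le_trans (add_le_add ihA hxB) ?_
        -- now pure arithmetic
        have hbm : S.card + 1 ≤ V.card := by
          have := Finset.card_le_card hSV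
          rwa [Finset.card_insert_of_notMem hu] at this
        have hcore := core15 V.card (e' + 1) (by omega) (by omega) (1 - x)
          (by linarith) (by linarith) S.card hbm
        have hC0 : (0 : ℝ) ≤ (V.card.choose (e' + 1) : ℝ) := by positivity
        have hmul := mul_le_mul_of_nonneg_left hcore hC0
        have hmR : ((V.card : ℕ) : ℝ) ≠ 0 := by positivity
        have hc' : ((V'.card : ℕ) : ℝ) = ((V.card : ℕ) : ℝ) - 1 := by
          rw [hcard]; push_cast; ring
        have he'' : ((e' : ℕ) : ℝ) = (((e' + 1 : ℕ)) : ℝ) - 1 := by push_cast; ring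
        have hnat : V.card * V'.card.choose e' = V.card.choose (e' + 1) * (e' + 1) := by
          rw [hcard]; exact Nat.add_one_mul_choose_eq V'.card e'
        have eq1 : (V'.card.choose e' : ℝ)
            = (((e' + 1 : ℕ)) : ℝ) / V.card * (V.card.choose (e' + 1) : ℝ) := by
          have : ((V.card : ℕ) : ℝ) * (V'.card.choose e' : ℝ)
              = (V.card.choose (e' + 1) : ℝ) * (((e' + 1 : ℕ)) : ℝ) := by
            exact_mod_cast congrArg (Nat.cast : ℕ → ℝ) hnat
          field_simp
          push_cast at this ⊢
          linarith
        have eq2 : (V'.card.choose (e' + 1) : ℝ)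
            = (1 - (((e' + 1 : ℕ)) : ℝ) / V.card) * (V.card.choose (e' + 1) : ℝ) := by
          have hnat2 : V.card.choose (e' + 1) = V'.card.choose e' + V'.card.choose (e' + 1) := by
            rw [hcard]; exact Nat.choose_succ_succ V'.card e'
          have h2' : (V.card.choose (e' + 1) : ℝ)
              = (V'.card.choose e' : ℝ) + (V'.card.choose (e' + 1) : ℝ) := by
            exact_mod_cast congrArg (Nat.cast : ℕ → ℝ) hnat2
          rw [eq1] at h2'
          field_simp at h2' ⊢
          push_cast at h2' ⊢
          linarith
        rw [Finset.card_insert_of_notMem hu, hc', he'', eq1, eq2]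
        linarith [hmul]

lemma tuple15 (d t n : ℕ) (hd : 1 ≤ d) (ht : 1 ≤ t) (hn : n = d * t) :
    ∀ (r : ℕ) (x : ℝ), 0 ≤ x → x ≤ 1 →
      ∑ A : Fin r → {s : Finset (Fin n) // s.card = d},
          x ^ ((Finset.univ.filter (fun u : Fin n => ∀ i : Fin r, u ∈ (A i).1)).card)
        ≤ ((Fintype.card {s : Finset (Fin n) // s.card = d} : ℝ)) ^ r
            * (1 - (1 - x) / (t : ℝ) ^ r) ^ n := by
  have htR : (1 : ℝ) ≤ t := by exact_mod_cast ht
  have htR0 : (0 : ℝ) < t := by linarith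
  have hdR0 : (0 : ℝ) < d := by exact_mod_cast hd
  intro r
  induction r with
  | zero =>
    intro x hx0 hx1
    rw [Fintype.sum_unique]
    have h1 : (Finset.univ.filter
        (fun u : Fin n => ∀ i : Fin 0, u ∈ ((default : Fin 0 → {s : Finset (Fin n) // s.card = d}) i).1)) = Finset.univ := by
      apply Finset.filter_true_of_mem
      exact fun u _ i => i.elim0
    rw [h1, Finset.card_univ, Fintype.card_fin, pow_zero, pow_zero, one_mul, div_one]
    have : (1 : ℝ) - (1 - x) = x := by ring
    rw [this]
  | succ r ih =>
    intro x hx0 hx1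
    have hy0 : 0 ≤ 1 - (1 - x) / t := by
      have h1 : (1 - x) / t ≤ 1 := by rw [div_le_one htR0]; linarith
      linarith
    have hy1 : 1 - (1 - x) / t ≤ 1 := by
      have : 0 ≤ (1 - x) / t := div_nonneg (by linarith) htR0.le
      linarith
    have ihy := ih (1 - (1 - x) / t) hy0 hy1
    have hstep : ∑ A : Fin (r+1) → {s : Finset (Fin n) // s.card = d},
          x ^ ((Finset.univ.filter (fun u : Fin n => ∀ i : Fin (r+1), u ∈ (A i).1)).card)
        = ∑ B : Fin r → {s : Finset (Fin n) // s.card = d},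
            ∑ a : {s : Finset (Fin n) // s.card = d},
              x ^ ((((Finset.univ.filter (fun u : Fin n => ∀ i : Fin r, u ∈ (B i).1))) ∩ a.1).card) := by
      rw [← Equiv.sum_comp (Fin.consEquiv (fun _ => {s : Finset (Fin n) // s.card = d}))
            (fun A : Fin (r+1) → {s : Finset (Fin n) // s.card = d} =>
              x ^ ((Finset.univ.filter (fun u : Fin n => ∀ i : Fin (r+1), u ∈ (A i).1)).card))]
      rw [Fintype.sum_prod_type_right]
      apply Finset.sum_congr rfl
      intro B _
      apply Finset.sum_congr rfl
      intro a _
      congr 1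
      congr 1
      ext u
      simp only [Finset.mem_filter, Finset.mem_univ, true_and, Finset.mem_inter,
        Fin.consEquiv_apply, Fin.forall_fin_succ, Fin.cons_zero, Fin.cons_succ]
      tauto
    rw [hstep]
    have hCnn : (0:ℝ) ≤ (Fintype.card {s : Finset (Fin n) // s.card = d} : ℝ) :=
      Nat.cast_nonneg _
    have hinner : ∀ B : Fin r → {s : Finset (Fin n) // s.card = d},
        ∑ a : {s : Finset (Fin n) // s.card = d},
            x ^ ((((Finset.univ.filter (fun u : Fin n => ∀ i : Fin r, u ∈ (B i).1))) ∩ a.1).card)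
          ≤ (Fintype.card {s : Finset (Fin n) // s.card = d} : ℝ)
              * (1 - (1 - x) / t) ^ ((Finset.univ.filter (fun u : Fin n => ∀ i : Fin r, u ∈ (B i).1)).card) := by
      intro B
      set T := Finset.univ.filter (fun u : Fin n => ∀ i : Fin r, u ∈ (B i).1) with hT
      have hh := hyper15 x hx0 hx1 T Finset.univ d (Finset.subset_univ _)
      rw [Finset.card_univ, Fintype.card_fin] at hh
      have hconv : ∑ a : {s : Finset (Fin n) // s.card = d}, x ^ ((T ∩ a.1).card)
          = ∑ s ∈ Finset.powersetCard d (Finset.univ : Finset (Fin n)), x ^ ((T ∩ s).card) :=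
        (Finset.sum_subtype (Finset.powersetCard d (Finset.univ : Finset (Fin n)))
          (fun s => Finset.mem_powersetCard_univ) (fun s => x ^ ((T ∩ s).card))).symm
      rw [hconv]
      refine le_trans hh (le_of_eq ?_)
      congr 1
      · rw [Fintype.card_finset_len, Fintype.card_fin]
      · congr 2
        rw [hn]; push_cast
        field_simp
    calc ∑ B : Fin r → {s : Finset (Fin n) // s.card = d}, ∑ a : {s : Finset (Fin n) // s.card = d},
            x ^ ((((Finset.univ.filter (fun u : Fin n => ∀ i : Fin r, u ∈ (B i).1))) ∩ a.1).card)
        ≤ ∑ B : Fin r → {s : Finset (Fin n) // s.card = d},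
            (Fintype.card {s : Finset (Fin n) // s.card = d} : ℝ)
              * (1 - (1 - x) / t) ^ ((Finset.univ.filter (fun u : Fin n => ∀ i : Fin r, u ∈ (B i).1)).card) :=
          Finset.sum_le_sum (fun B _ => hinner B)
      _ = (Fintype.card {s : Finset (Fin n) // s.card = d} : ℝ)
            * ∑ B : Fin r → {s : Finset (Fin n) // s.card = d},
              (1 - (1 - x) / t) ^ ((Finset.univ.filter (fun u : Fin n => ∀ i : Fin r, u ∈ (B i).1)).card) :=
          (Finset.mul_sum _ _ _).symm
      _ ≤ (Fintype.card {s : Finset (Fin n) // s.card = d} : ℝ)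
            * ((Fintype.card {s : Finset (Fin n) // s.card = d} : ℝ) ^ r
                * (1 - (1 - (1 - (1 - x) / t)) / (t : ℝ) ^ r) ^ n) :=
          mul_le_mul_of_nonneg_left ihy hCnn
      _ = (Fintype.card {s : Finset (Fin n) // s.card = d} : ℝ) ^ (r + 1)
            * (1 - (1 - x) / (t : ℝ) ^ (r + 1)) ^ n := by
          have harg : 1 - (1 - (1 - (1 - x) / t)) / (t : ℝ) ^ r = 1 - (1 - x) / (t : ℝ) ^ (r + 1) := by
            rw [sub_sub_cancel, div_div, ← pow_succ']
          rw [harg]; ring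

/-- empty intersection of independent uniform `d`-subsets.
Let `n = d·t` and let `A_1,…,A_r` be independent uniformly random `d`-element
subsets of an `n`-element set. Then
`P(A_1 ∩ ⋯ ∩ A_r = ∅) ≤ (1 − 1/t^r)^n`. The probability is expressed by
counting: the number of `r`-tuples of `d`-subsets with empty intersection,
divided by the total number `(#{d-subsets})^r` of `r`-tuples. -/
theorem stmt_15 (d t r n : ℕ) (hd : 1 ≤ d) (ht : 1 ≤ t) (hr : 1 ≤ r)
    (hn : n = d * t) :
    ((Finset.univ.filter
        (fun A : Fin r → {s : Finset (Fin n) // s.card = d} =>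
          ∀ u : Fin n, ∃ i : Fin r, u ∉ (A i).1)).card : ℝ)
      / ((Fintype.card {s : Finset (Fin n) // s.card = d} : ℝ)) ^ r
    ≤ (1 - 1 / (t : ℝ) ^ r) ^ n := by
  have hdn : d ≤ n := by
    rw [hn]; exact Nat.le_mul_of_pos_right d (by omega)
  have hC : 0 < Fintype.card {s : Finset (Fin n) // s.card = d} := by
    rw [Fintype.card_finset_len, Fintype.card_fin]
    exact Nat.choose_pos hdn
  have hCR : (0:ℝ) < (Fintype.card {s : Finset (Fin n) // s.card = d} : ℝ) := by
    exact_mod_cast hC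
  have hkey := tuple15 d t n hd ht hn r 0 le_rfl zero_le_one
  have hcount : ((Finset.univ.filter
      (fun A : Fin r → {s : Finset (Fin n) // s.card = d} =>
        ∀ u : Fin n, ∃ i : Fin r, u ∉ (A i).1)).card : ℝ)
      = ∑ A : Fin r → {s : Finset (Fin n) // s.card = d},
          (0:ℝ) ^ ((Finset.univ.filter (fun u : Fin n => ∀ i : Fin r, u ∈ (A i).1)).card) := by
    rw [← Finset.sum_boole]
    apply Finset.sum_congr rfl
    intro A _
    by_cases h : ∀ u : Fin n, ∃ i : Fin r, u ∉ (A i).1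
    · rw [if_pos h]
      have he : (Finset.univ.filter (fun u : Fin n => ∀ i : Fin r, u ∈ (A i).1)) = ∅ := by
        rw [Finset.filter_eq_empty_iff]
        intro u _
        obtain ⟨i, hi⟩ := h u
        exact fun hall => hi (hall i)
      rw [he]
      simp
    · rw [if_neg h]
      push_neg at h
      obtain ⟨u, hu⟩ := h
      have hmem : u ∈ Finset.univ.filter (fun u : Fin n => ∀ i : Fin r, u ∈ (A i).1) := by
        simp only [Finset.mem_filter, Finset.mem_univ, true_and]
        exact hu
      rw [zero_pow (Finset.card_ne_zero_of_mem hmem)]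
  rw [div_le_iff₀ (by positivity)]
  rw [hcount]
  have h10 : (1:ℝ) - (1 - 0) / (t:ℝ) ^ r = 1 - 1 / (t:ℝ) ^ r := by ring
  rw [h10] at hkey
  linarith [hkey]
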